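/- Let C be a category and W a class of morphisms of C. In the category Fun^W(ℕ,C), the class of morphisms 𝒱 := { v^k_C : C → T^{k,*}C ∣ k ∈ ℕ, C ∈ Fun^W(ℕ,C) } contains all identities, is closed under composition, and satisfies a Gabriel–Zisman left calculus of fractions: (left Ore) for every s : X → Y in 𝒱 and every morphism u : X → Z there exist t : Z → W' in 𝒱 and v : Y → W' with t ∘ u = v ∘ s; (left cancellation) for parallel morphisms f, g : X → Y and s : X' → X in 𝒱 with f ∘ s = g ∘ s, there exists t : Y → Y' in 𝒱 with t ∘ f = t ∘ g. -/

import Mathlib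

/-!
Statement 2: in `Fun^W(ℕ,C)`, the class `𝒱 = { v^k_C : C ⟶ T^{k,*}C }` contains all identities,
is closed under composition, and satisfies a Gabriel–Zisman left calculus of fractions.
-/

open CategoryTheory

universe v u

namespace ShiftCat

variable {C : Type u} [Category.{v} C] (W : MorphismProperty C)

/-- `Fun^W(ℕ,C)`: functors `ℕ ⥤ C` all of whose consecutive structure maps lie in `W`. -/
abbrev WSeq := ObjectProperty.FullSubcategory (fun F : ℕ ⥤ C => ∀ n : ℕ, W (F.map (homOfLE (Nat.le_succ n))))

variable {W}

lemma natHom_eq {a b : ℕ} (f g : a ⟶ b) : f = g := Subsingleton.elim f g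

/-- The shift `T^{k,*}` by `k` on objects: precomposition with the `k`-th power of the
successor functor `T`. -/
def shObj (k : ℕ) (F : WSeq W) : WSeq W where
  obj :=
    { obj := fun n => F.obj.obj (n + k)
      map := fun {a b} f => F.obj.map (homOfLE (Nat.add_le_add_right (leOfHom f) k))
      map_id := fun n =>
        (congrArg F.obj.map (natHom_eq _ (𝟙 (n + k)))).trans (F.obj.map_id _)
      map_comp := fun {a b c} f g =>
        (congrArg F.obj.map (natHom_eq _ (homOfLE (Nat.add_le_add_right (leOfHom f) k) ≫
          homOfLE (Nat.add_le_add_right (leOfHom g) k)))).trans (F.obj.map_comp _ _) }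
  property := fun n => by
    have h : ∀ {x y : ℕ} (p : x ≤ y), y = x + 1 → W (F.obj.map (homOfLE p)) := by
      intro x y p hy
      subst hy
      exact F.property x
    exact h _ (by omega)

/-- The `k`-fold iterate `v^k_F : F ⟶ T^{k,*}F` of the canonical natural transformation
`v : id ⟶ T^*`; its component at `n` is the structure map `F(n) ⟶ F(n+k)`. -/
def vpow (k : ℕ) (F : WSeq W) : F ⟶ shObj k F where
  hom :=
  { app n := F.obj.map (homOfLE (Nat.le_add_right n k))
    naturality a b f := by
      show F.obj.map _ ≫ F.obj.map _ = F.obj.map _ ≫ F.obj.map _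
      rw [← F.obj.map_comp, ← F.obj.map_comp]
      exact congrArg F.obj.map (natHom_eq _ _) }

variable (W)

/-- The class `𝒱 = { v^k_C ∣ k ∈ ℕ, C ∈ Fun^W(ℕ,C) }`. -/
def Vclass : MorphismProperty (WSeq W) :=
  fun X Y f => ∃ (k : ℕ) (h : shObj k X = Y), f = vpow k X ≫ eqToHom h

section Aux

variable {W}


lemma mapLE_eq (F : ℕ ⥤ C) {a b a' b' : ℕ} (p : a ≤ b) (p' : a' ≤ b')
    (ha : a = a') (hb : b' = b) :
    F.map (homOfLE p) = eqToHom (congrArg F.obj ha) ≫ F.map (homOfLE p') ≫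
      eqToHom (congrArg F.obj hb) := by
  subst ha; subst hb
  simp

lemma shObj_shObj (k l : ℕ) (X : WSeq W) : shObj (k + l) X = shObj l (shObj k X) := by
  have hobj : ∀ n : ℕ, n + (k + l) = n + l + k := by omega
  apply ObjectProperty.FullSubcategory.ext
  refine CategoryTheory.Functor.ext (fun n => ?_) (fun a b f => ?_)
  · exact congrArg X.obj.obj (hobj n)
  · exact mapLE_eq X.obj _ _ (hobj a) (hobj b).symm

lemma eqToHom_app' {X Y : WSeq W} (h : X = Y) (n : ℕ) :
    (eqToHom h : X ⟶ Y).hom.app n = eqToHom (congrArg (fun Z : WSeq W => Z.obj.obj n) h) := by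
  subst h; rfl
lemma vpow_comp (k l : ℕ) (X : WSeq W) :
    vpow k X ≫ vpow l (shObj k X) = vpow (k + l) X ≫ eqToHom (shObj_shObj k l X) := by
  apply ObjectProperty.hom_ext; apply NatTrans.ext; funext n
  show X.obj.map _ ≫ X.obj.map _ = X.obj.map _ ≫ (eqToHom (shObj_shObj k l X) : _ ⟶ _).hom.app n
  rw [← X.obj.map_comp, eqToHom_app']
  have heq : (eqToHom (congrArg (fun Z : WSeq W => Z.obj.obj n) (shObj_shObj k l X)))
      = eqToHom (congrArg X.obj.obj (show n + (k+l) = n + l + k by omega)) := by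
    congr 1
  rw [heq]
  have := mapLE_eq X.obj
    (show n ≤ n + l + k by omega) (Nat.le_add_right n (k+l)) rfl
    (show n + (k+l) = n + l + k by omega)
  simp only [eqToHom_refl, Category.id_comp] at this
  exact (congrArg X.obj.map (natHom_eq _ _)).trans this

/-- shift a morphism -/
def shMap (k : ℕ) {X Z : WSeq W} (u : X ⟶ Z) : shObj k X ⟶ shObj k Z where
  hom :=
  { app n := u.hom.app (n + k)
    naturality _ _ f := u.hom.naturality (homOfLE (Nat.add_le_add_right (leOfHom f) k)) }

lemma vpow_natural (k : ℕ) {X Z : WSeq W} (u : X ⟶ Z) :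
    u ≫ vpow k Z = vpow k X ≫ shMap k u := by
  apply ObjectProperty.hom_ext; apply NatTrans.ext; funext n
  show u.hom.app n ≫ Z.obj.map _ = X.obj.map _ ≫ u.hom.app (n + k)
  exact (u.hom.naturality (homOfLE (Nat.le_add_right n k))).symm

lemma comp_vpow_app (k : ℕ) {X' Y : WSeq W} (u : shObj k X' ⟶ Y) (n : ℕ) :
    (u ≫ vpow k Y).hom.app n = (vpow k X' ≫ u).hom.app (n + k) := by
  show u.hom.app n ≫ Y.obj.map _ = X'.obj.map _ ≫ u.hom.app (n + k)
  rw [← u.hom.naturality (homOfLE (Nat.le_add_right n k) : (n : ℕ) ⟶ n + k)]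
  show X'.obj.map _ ≫ _ = X'.obj.map _ ≫ _
  congr 1

end Aux

theorem statement2 :
    -- 𝒱 contains all identities
    (∀ X : WSeq W, Vclass W (𝟙 X)) ∧
    -- 𝒱 is closed under composition
    (∀ (X Y Z : WSeq W) (f : X ⟶ Y) (g : Y ⟶ Z),
      Vclass W f → Vclass W g → Vclass W (f ≫ g)) ∧
    -- left Ore condition
    (∀ (X Y Z : WSeq W) (s : X ⟶ Y) (u : X ⟶ Z), Vclass W s →
      ∃ (W' : WSeq W) (t : Z ⟶ W') (v : Y ⟶ W'), Vclass W t ∧ u ≫ t = s ≫ v) ∧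
    -- left cancellation
    (∀ (X Y X' : WSeq W) (f g : X ⟶ Y) (s : X' ⟶ X), Vclass W s →
      s ≫ f = s ≫ g → ∃ (Y' : WSeq W) (t : Y ⟶ Y'), Vclass W t ∧ f ≫ t = g ≫ t) := by
  refine ⟨?_, ?_, ?_, ?_⟩
  · intro X
    refine ⟨0, rfl, ?_⟩
    apply ObjectProperty.hom_ext; apply NatTrans.ext; funext n
    show 𝟙 (X.obj.obj n) = X.obj.map (homOfLE (Nat.le_add_right n 0)) ≫ 𝟙 _
    rw [Category.comp_id]
    rw [show homOfLE (Nat.le_add_right n 0) = 𝟙 n from natHom_eq _ _, X.obj.map_id]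
  · rintro X Y Z f g ⟨k, h1, hf⟩ ⟨l, h2, hg⟩
    subst h1; subst h2; subst hf; subst hg
    refine ⟨k + l, shObj_shObj k l X, ?_⟩
    simp only [eqToHom_refl, Category.comp_id]
    exact vpow_comp k l X
  · rintro X Y Z s u ⟨k, h, hs⟩
    subst h; subst hs
    refine ⟨shObj k Z, vpow k Z, shMap k u, ⟨k, rfl, (Category.comp_id _).symm⟩, ?_⟩
    simp only [eqToHom_refl, Category.comp_id]
    exact vpow_natural k u
  · rintro X Y X' f g s ⟨k, h, hs⟩ hfg
    subst h; subst hs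
    simp only [eqToHom_refl, Category.comp_id] at hfg
    refine ⟨shObj k Y, vpow k Y, ⟨k, rfl, (Category.comp_id _).symm⟩, ?_⟩
    apply ObjectProperty.hom_ext; apply NatTrans.ext; funext n
    rw [comp_vpow_app k f n, comp_vpow_app k g n, hfg]


end ShiftCat
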